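/- Let V be a 2n-dimensional real vector space with non-degenerate symmetric bilinear form g of signature (n, n), and h ≠ 0 a g-self-adjoint endomorphism with h² = 0 of rank m. After decomposing V = L₁ ⊕ ⋯ ⊕ L_m ⊕ W with each Lᵢ = span{Xᵢ, Yᵢ} of signature (1,1) as in the canonical basis construction, the restriction of g to W = (L₁ ⊕ ⋯ ⊕ L_m)^⊥ has signature (n − m, n − m) and h vanishes on W. -/

import Mathlib

open Module Submodule

lemma aux_gsum {V : Type*} [AddCommGroup V] [Module ℝ V]
    (g : LinearMap.BilinForm ℝ V) {ι : Type*} [Fintype ι] [DecidableEq ι] (F : ι → V) (w : ι → ℝ)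
    (hGram : ∀ k l, g (F k) (F l) = if k = l then w k else 0) (a : ι → ℝ) :
    g (∑ k, a k • F k) (∑ k, a k • F k) = ∑ k, a k ^ 2 * w k := by
  rw [map_sum]
  simp only [LinearMap.coe_sum, Finset.sum_apply, map_sum, map_smul, LinearMap.smul_apply,
    smul_eq_mul, hGram, mul_ite, mul_zero]
  refine Finset.sum_congr rfl fun k _ => ?_
  rw [Finset.sum_ite_eq' (Finset.univ) k fun l => a l * w l]
  simp
  ring

lemma aux_card {V : Type*} [AddCommGroup V] [Module ℝ V] [FiniteDimensional ℝ V]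
    (g : LinearMap.BilinForm ℝ V) {ι : Type*} [Fintype ι] [DecidableEq ι] (F : ι → V) (w : ι → ℝ)
    (hw : ∀ k, 0 < w k)
    (hGram : ∀ k l, g (F k) (F l) = if k = l then w k else 0)
    (N : Submodule ℝ V) (hN : ∀ x ∈ N, g x x ≤ 0) :
    Fintype.card ι + finrank ℝ N ≤ finrank ℝ V := by
  have hLI : LinearIndependent ℝ F := by
    apply LinearMap.linearIndependent_of_isOrthoᵢ (B := g)
    · intro k l hkl
      simp [LinearMap.IsOrtho, Function.onFun, hGram, hkl]
    · intro k
      simp only [LinearMap.IsOrtho, hGram, if_pos rfl]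
      exact (hw k).ne'
  set P := span ℝ (Set.range F) with hP
  have hdisj : P ⊓ N = ⊥ := by
    rw [eq_bot_iff]
    rintro x ⟨hxP, hxN⟩
    obtain ⟨a, rfl⟩ := mem_span_range_iff_exists_fun ℝ |>.mp hxP
    have h1 : g (∑ k, a k • F k) (∑ k, a k • F k) = ∑ k, a k ^ 2 * w k :=
      aux_gsum g F w hGram a
    have h2 : ∑ k, a k ^ 2 * w k ≤ 0 := h1 ▸ hN _ hxN
    have h3 : ∀ k ∈ Finset.univ, (0:ℝ) ≤ a k ^ 2 * w k := fun k _ =>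
      mul_nonneg (sq_nonneg _) (hw k).le
    have h4 : ∑ k, a k ^ 2 * w k = 0 := le_antisymm h2 (Finset.sum_nonneg h3)
    have h5 : ∀ k ∈ Finset.univ, a k ^ 2 * w k = 0 :=
      (Finset.sum_eq_zero_iff_of_nonneg h3).mp h4
    have h6 : ∀ k, a k = 0 := fun k => by
      have := h5 k (Finset.mem_univ k)
      have hk := (hw k).ne'
      have : a k ^ 2 = 0 := by
        rcases mul_eq_zero.mp this with h | h
        · exact h
        · exact absurd h hk
      exact pow_eq_zero_iff (by norm_num) |>.mp this
    simp [h6, Submodule.mem_bot]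
  have hrankP : finrank ℝ P = Fintype.card ι := finrank_span_eq_card hLI
  have := Submodule.finrank_sup_add_finrank_inf_eq P N
  rw [hdisj] at this
  simp only [finrank_bot, add_zero] at this
  have hle : finrank ℝ ↥(P ⊔ N) ≤ finrank ℝ V := Submodule.finrank_le _
  omega

set_option maxHeartbeats 1000000 in
theorem stmt16 (V : Type*) [AddCommGroup V] [Module ℝ V] [FiniteDimensional ℝ V]
    (n m : ℕ) (hm : 1 ≤ m) (hmn : m ≤ n)
    (g : LinearMap.BilinForm ℝ V) (hsym : ∀ x y, g x y = g y x)
    -- g has signature (n, n) on the 2n-dimensional space V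
    (e : Basis (Fin n ⊕ Fin n) ℝ V)
    (hsig : ∀ i j, g (e i) (e j) =
      if i = j then Sum.elim (fun _ => (1 : ℝ)) (fun _ => (-1 : ℝ)) i else 0)
    (h : V →ₗ[ℝ] V) (hsa : ∀ x y, g (h x) y = g x (h y))
    (hsq : h ∘ₗ h = 0)
    (hrank : Module.finrank ℝ (LinearMap.range h) = m)
    -- the canonical vectors Xᵢ spanning the subspaces Lᵢ = span {Xᵢ, h Xᵢ}
    (X : Fin m → V) (ε : Fin m → ℝ) (hε : ∀ i, ε i = 1 ∨ ε i = -1)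
    (hXX : ∀ i, g (X i) (X i) = 0)
    (hhXhX : ∀ i, g (h (X i)) (h (X i)) = 0)
    (hXhX : ∀ i, g (X i) (h (X i)) = ε i)
    -- the Lᵢ are mutually g-orthogonal
    (horth₁ : ∀ i j, i ≠ j → g (X i) (X j) = 0)
    (horth₂ : ∀ i j, i ≠ j → g (X i) (h (X j)) = 0)
    (horth₃ : ∀ i j, i ≠ j → g (h (X i)) (h (X j)) = 0)
    -- W is the common orthogonal complement of the Lᵢ
    (W : Submodule ℝ V)
    (hW : W = g.orthogonal
      (Submodule.span ℝ (Set.range X ∪ Set.range (fun i => h (X i))))) :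
    (∀ w ∈ W, h w = 0) ∧
    ∃ b : Basis (Fin (n - m) ⊕ Fin (n - m)) ℝ W,
      ∀ i j, g ((b i : V)) ((b j : V)) =
        if i = j then Sum.elim (fun _ => (1 : ℝ)) (fun _ => (-1 : ℝ)) i else 0 := by
  classical
  have gsymm : g.IsSymm := ⟨fun x y => hsym x y⟩
  have grefl : g.IsRefl := gsymm.isRefl
  have hεne : ∀ i, ε i ≠ 0 := fun i => by rcases hε i with h' | h' <;> rw [h'] <;> norm_num
  set F : Fin m ⊕ Fin m → V := Sum.elim X (fun i => h (X i)) with hF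
  have hUdef : Submodule.span ℝ (Set.range X ∪ Set.range fun i => h (X i)) =
      Submodule.span ℝ (Set.range F) := by rw [hF, Set.Sum.elim_range]
  set U := Submodule.span ℝ (Set.range F) with hU
  have hWU : W = g.orthogonal U := by rw [hW, hUdef]
  have hXU : ∀ i, X i ∈ U := fun i => subset_span ⟨Sum.inl i, rfl⟩
  have hhXU : ∀ i, h (X i) ∈ U := fun i => subset_span ⟨Sum.inr i, rfl⟩
  -- the Gram table of F against X j and h (X j)
  have hGX : ∀ (k : Fin m ⊕ Fin m) (j : Fin m),
      g (F k) (X j) = if k = Sum.inr j then ε j else 0 := by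
    rintro (i | i) j
    · rcases eq_or_ne i j with rfl | hij
      · simp [hF, hXX i]
      · simp [hF, horth₁ i j hij]
    · rw [hF]
      simp only [Sum.elim_inr, Sum.inr.injEq]
      rw [hsym]
      rcases eq_or_ne i j with rfl | hij
      · simp [hXhX i]
      · simp [horth₂ j i (Ne.symm hij), hij]
  have hGhX : ∀ (k : Fin m ⊕ Fin m) (j : Fin m),
      g (F k) (h (X j)) = if k = Sum.inl j then ε j else 0 := by
    rintro (i | i) j
    · rw [hF]
      simp only [Sum.elim_inl, Sum.inl.injEq]
      rcases eq_or_ne i j with rfl | hij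
      · simp [hXhX i]
      · simp [horth₂ i j hij, hij]
    · rcases eq_or_ne i j with rfl | hij
      · simp [hF, hhXhX i]
      · simp [hF, horth₃ i j hij]
  -- pairings of a combination
  have hpairX : ∀ (c : Fin m ⊕ Fin m → ℝ) (j : Fin m),
      g (∑ k, c k • F k) (X j) = c (Sum.inr j) * ε j := by
    intro c j
    rw [map_sum]
    simp only [LinearMap.coe_sum, Finset.sum_apply, LinearMap.map_smul₂,
      LinearMap.smul_apply, smul_eq_mul, hGX, mul_ite, mul_zero]
    rw [Finset.sum_ite_eq' (Finset.univ) (Sum.inr j) fun k => c k * ε j]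
    simp
  have hpairhX : ∀ (c : Fin m ⊕ Fin m → ℝ) (j : Fin m),
      g (∑ k, c k • F k) (h (X j)) = c (Sum.inl j) * ε j := by
    intro c j
    rw [map_sum]
    simp only [LinearMap.coe_sum, Finset.sum_apply, LinearMap.map_smul₂,
      LinearMap.smul_apply, smul_eq_mul, hGhX, mul_ite, mul_zero]
    rw [Finset.sum_ite_eq' (Finset.univ) (Sum.inl j) fun k => c k * ε j]
    simp
  -- linear independence of F
  have hLIF : LinearIndependent ℝ F := by
    rw [Fintype.linearIndependent_iff]
    intro c hc k
    have h1 : ∀ j, c (Sum.inr j) * ε j = 0 := fun j => by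
      rw [← hpairX c j, hc]; simp
    have h2 : ∀ j, c (Sum.inl j) * ε j = 0 := fun j => by
      rw [← hpairhX c j, hc]; simp
    rcases k with j | j
    · exact (mul_eq_zero.mp (h2 j)).resolve_right (hεne j)
    · exact (mul_eq_zero.mp (h1 j)).resolve_right (hεne j)
  have hrankU : finrank ℝ U = m + m := by
    rw [hU, finrank_span_eq_card hLIF]
    simp
  -- nondegeneracy of g restricted to U
  have hUnd : (g.restrict U).Nondegenerate := by
    refine LinearMap.BilinForm.Nondegenerate.ofSeparatingLeft ?_
    rintro ⟨x, hx⟩ H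
    obtain ⟨c, rfl⟩ := (mem_span_range_iff_exists_fun ℝ).mp (hU ▸ hx)
    have hc : ∀ k, c k = 0 := by
      intro k
      rcases k with j | j
      · have := H ⟨h (X j), hhXU j⟩
        rw [LinearMap.BilinForm.restrict_apply] at this
        have := (hpairhX c j).symm.trans this
        exact (mul_eq_zero.mp this).resolve_right (hεne j)
      · have := H ⟨X j, hXU j⟩
        rw [LinearMap.BilinForm.restrict_apply] at this
        have := (hpairX c j).symm.trans this
        exact (mul_eq_zero.mp this).resolve_right (hεne j)
    ext
    simp [hc]
  have hcompl : IsCompl U W := by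
    rw [hWU]
    exact g.isCompl_orthogonal_of_restrict_nondegenerate grefl hUnd
  -- nondegeneracy of g on V
  have hVnd : g.Nondegenerate := by
    refine LinearMap.BilinForm.Nondegenerate.ofSeparatingLeft ?_
    intro x hx
    have hrepr : ∀ j, e.repr x j = 0 := by
      intro j
      have h0 := hx (e j)
      conv_lhs at h0 => rw [← e.sum_repr x]
      rw [map_sum] at h0
      simp only [LinearMap.coe_sum, Finset.sum_apply, LinearMap.map_smul₂,
        LinearMap.smul_apply, smul_eq_mul, hsig, mul_ite, mul_zero] at h0
      rw [Finset.sum_ite_eq' (Finset.univ) j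
        fun i => e.repr x i * Sum.elim (fun _ => (1:ℝ)) (fun _ => (-1:ℝ)) i] at h0
      simp only [Finset.mem_univ, if_true] at h0
      rcases j with j | j <;> · simp only [Sum.elim_inl, Sum.elim_inr, mul_one, mul_neg_one, neg_eq_zero] at h0; exact h0
    have := e.sum_repr x
    rw [← this]
    simp [hrepr]
  have hdimV : finrank ℝ V = n + n := by
    rw [finrank_eq_card_basis e]; simp
  have hdimW : finrank ℝ W = (n - m) + (n - m) := by
    rw [hWU, LinearMap.BilinForm.finrank_orthogonal hVnd, hrankU, hdimV]
    omega
  -- membership facts about W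
  have hWorth : ∀ x ∈ W, ∀ t ∈ U, g t x = 0 := by
    intro x hx t ht
    rw [hWU] at hx
    exact hx t ht
  constructor
  · -- h vanishes on W
    have hrange : LinearMap.range h = span ℝ (Set.range fun i => h (X i)) := by
      symm
      apply Submodule.eq_of_le_of_finrank_le
      · rw [span_le]
        rintro _ ⟨i, rfl⟩
        exact ⟨X i, rfl⟩
      · rw [hrank]
        have hLI2 : LinearIndependent ℝ (fun i => h (X i)) := hLIF.comp Sum.inr Sum.inr_injective
        rw [finrank_span_eq_card hLI2]
        simp
    intro w hw
    have hmem : h w ∈ span ℝ (Set.range fun i => h (X i)) := hrange ▸ LinearMap.mem_range_self h w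
    obtain ⟨c, hc⟩ := (mem_span_range_iff_exists_fun ℝ).mp hmem
    have hcz : ∀ j, c j = 0 := by
      intro j
      have h1 : g (X j) (h w) = 0 := by
        rw [← hsa]
        exact hsym _ _ ▸ hWorth w hw (h (X j)) (hhXU j)
      rw [← hc, map_sum] at h1
      simp only [map_smul, smul_eq_mul] at h1
      have : ∀ i, g (X j) (h (X i)) = if i = j then ε j else 0 := by
        intro i
        rcases eq_or_ne i j with rfl | hij
        · simp [hXhX i]
        · simp [horth₂ j i (Ne.symm hij), hij]
      simp only [this, mul_ite, mul_zero] at h1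
      rw [Finset.sum_ite_eq' (Finset.univ) j fun i => c i * ε j] at h1
      simp only [Finset.mem_univ, if_true] at h1
      exact (mul_eq_zero.mp h1).resolve_right (hεne j)
    rw [← hc]
    simp [hcz]
  · -- the basis of W
    set gW := g.restrict W with hgW
    have gWsymm : gW.IsSymm := by
      refine ⟨fun x y => ?_⟩
      simp only [hgW, LinearMap.BilinForm.restrict_apply, RingHom.id_apply]
      exact hsym _ _
    have gWnd : gW.Nondegenerate := by
      refine LinearMap.BilinForm.Nondegenerate.ofSeparatingLeft ?_
      rintro ⟨x, hx⟩ H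
      have hx0 : ∀ y : V, g x y = 0 := by
        intro y
        have hy : y ∈ U ⊔ W := by rw [hcompl.sup_eq_top]; trivial
        obtain ⟨t, ht, z, hz, rfl⟩ := Submodule.mem_sup.mp hy
        have e1 : g x t = 0 := grefl _ _ (hWorth x hx t ht)
        have e2 : g x z = 0 := by
          have := H ⟨z, hz⟩
          rwa [LinearMap.BilinForm.restrict_apply] at this
        simp [e1, e2]
      exact Subtype.ext (hVnd.1 x hx0)
    obtain ⟨v, hv⟩ := LinearMap.BilinForm.exists_orthogonal_basis (LinearMap.BilinForm.isSymm_iff.mp gWsymm)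
    set c : Fin (finrank ℝ W) → ℝ := fun i => g (v i : V) (v i : V) with hcdef
    have hcne : ∀ i, c i ≠ 0 := by
      intro i
      have := LinearMap.BilinForm.iIsOrtho.not_isOrtho_basis_self_of_nondegenerate (v := v) hv gWnd i
      simpa [LinearMap.BilinForm.IsOrtho, hcdef, hgW] using this
    set r : Fin (finrank ℝ W) → ℝ := fun i => (Real.sqrt |c i|)⁻¹ with hrdef
    have habs : ∀ i, 0 < |c i| := fun i => abs_pos.mpr (hcne i)
    have hrpos : ∀ i, 0 < r i := fun i => by
      rw [hrdef]
      exact inv_pos.mpr (Real.sqrt_pos.mpr (habs i))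
    have hrunit : ∀ i, IsUnit (r i) := fun i => (isUnit_iff_ne_zero).mpr (hrpos i).ne'
    set u : Basis (Fin (finrank ℝ W)) ℝ W := v.isUnitSMul hrunit with hudef
    have hu_apply : ∀ i, (u i : V) = r i • (v i : V) := by
      intro i
      rw [hudef, Basis.isUnitSMul_apply]
      rfl
    have hr2 : ∀ i, r i * r i = |c i|⁻¹ := by
      intro i
      rw [hrdef]
      rw [← mul_inv]
      rw [Real.mul_self_sqrt (abs_nonneg _)]
    have hs : ∀ i, g (u i : V) (u i : V) = c i / |c i| := by
      intro i
      rw [hu_apply]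
      simp only [map_smul, LinearMap.map_smul₂, LinearMap.smul_apply, smul_eq_mul]
      rw [← mul_assoc, hr2, inv_mul_eq_div]
    have hspos : ∀ i, 0 < c i → g (u i : V) (u i : V) = 1 := by
      intro i hi
      rw [hs, abs_of_pos hi, div_self hi.ne']
    have hsneg : ∀ i, ¬ 0 < c i → g (u i : V) (u i : V) = -1 := by
      intro i hi
      have hlt : c i < 0 := lt_of_le_of_ne (not_lt.mp hi) (hcne i)
      rw [hs, abs_of_neg hlt, div_neg, div_self (hcne i)]
    have huortho : ∀ i j, i ≠ j → g (u i : V) (u j : V) = 0 := by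
      intro i j hij
      have := hv hij
      have hvij : g (v i : V) (v j : V) = 0 := this
      rw [hu_apply, hu_apply]
      simp [hvij]
    have huW : ∀ i, (u i : V) ∈ W := fun i => (u i).2
    -- counting
    set Pos : Fin (finrank ℝ W) → Prop := fun i => 0 < c i with hPosdef
    have hple : Fintype.card {i // Pos i} + m ≤ n := by
      set G : {i // Pos i} ⊕ Fin m → V :=
        Sum.elim (fun i => (u i.1 : V)) (fun j => X j + ε j • h (X j)) with hGdef
      have hPU : ∀ j, X j + ε j • h (X j) ∈ U := fun j =>
        add_mem (hXU j) (smul_mem _ _ (hhXU j))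
      have hGram : ∀ k l, g (G k) (G l) =
          if k = l then Sum.elim (fun _ => (1:ℝ)) (fun _ => (2:ℝ)) k else 0 := by
        rintro (i | i) (j | j)
        · simp only [hGdef, Sum.elim_inl, Sum.inl.injEq]
          rcases eq_or_ne i j with rfl | hij
          · simp [hspos i.1 i.2]
          · simp [huortho i.1 j.1 (fun hh => hij (Subtype.ext hh)), hij]
        · simp only [hGdef, Sum.elim_inl, Sum.elim_inr, reduceCtorEq, if_false]
          exact grefl _ _ (hWorth _ (huW i.1) _ (hPU j))
        · simp only [hGdef, Sum.elim_inl, Sum.elim_inr, reduceCtorEq, if_false]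
          exact hWorth _ (huW j.1) _ (hPU i)
        · simp only [hGdef, Sum.elim_inr, Sum.inr.injEq]
          have expand : ∀ i j : Fin m, g (X i + ε i • h (X i)) (X j + ε j • h (X j)) =
              g (X i) (X j) + ε j * g (X i) (h (X j)) + ε i * g (h (X i)) (X j)
                + ε i * (ε j * g (h (X i)) (h (X j))) := by
            intro i j
            simp only [map_add, LinearMap.add_apply, map_smul, LinearMap.map_smul₂,
              LinearMap.smul_apply, smul_eq_mul]
            ring
          rcases eq_or_ne i j with rfl | hij
          · rw [expand, hXX i, hhXhX i, hXhX i, hsym (h (X i)) (X i), hXhX i]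
            rcases hε i with h' | h' <;> rw [h'] <;> norm_num
          · rw [expand, horth₁ i j hij, horth₂ i j hij, horth₃ i j hij,
              hsym (h (X i)) (X j), horth₂ j i (Ne.symm hij)]
            simp [hij]
      have hNneg : ∀ x ∈ span ℝ (Set.range (⇑e ∘ Sum.inr)),
          g x x ≤ 0 := by
        intro x hx
        obtain ⟨a, rfl⟩ := (mem_span_range_iff_exists_fun ℝ).mp hx
        rw [aux_gsum g _ (fun _ => (-1:ℝ)) (fun k l => by
          simp only [Function.comp_apply, hsig]
          rcases eq_or_ne k l with rfl | hkl
          · simp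
          · simp [hkl]) a]
        apply Finset.sum_nonpos
        intro k _
        nlinarith [sq_nonneg (a k)]
      have hNrank : finrank ℝ (span ℝ (Set.range (⇑e ∘ Sum.inr))) = n := by
        rw [finrank_span_eq_card (e.linearIndependent.comp Sum.inr Sum.inr_injective)]
        simp
      have := aux_card g G (Sum.elim (fun _ => (1:ℝ)) (fun _ => (2:ℝ)))
        (by rintro (k | k) <;> norm_num) hGram _ hNneg
      rw [hNrank, hdimV] at this
      simp only [Fintype.card_sum, Fintype.card_fin] at this
      omega
    have hqle : Fintype.card {i // ¬ Pos i} + m ≤ n := by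
      set G : {i // ¬ Pos i} ⊕ Fin m → V :=
        Sum.elim (fun i => (u i.1 : V)) (fun j => X j - ε j • h (X j)) with hGdef
      have hPU : ∀ j, X j - ε j • h (X j) ∈ U := fun j =>
        sub_mem (hXU j) (smul_mem _ _ (hhXU j))
      have hGram : ∀ k l, (-g) (G k) (G l) =
          if k = l then Sum.elim (fun _ => (1:ℝ)) (fun _ => (2:ℝ)) k else 0 := by
        rintro (i | i) (j | j)
        · simp only [hGdef, Sum.elim_inl, Sum.inl.injEq, LinearMap.neg_apply]
          rcases eq_or_ne i j with rfl | hij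
          · simp [hsneg i.1 i.2]
          · simp [huortho i.1 j.1 (fun hh => hij (Subtype.ext hh)), hij]
        · simp only [hGdef, Sum.elim_inl, Sum.elim_inr, reduceCtorEq, if_false,
            LinearMap.neg_apply, neg_eq_zero]
          exact grefl _ _ (hWorth _ (huW i.1) _ (hPU j))
        · simp only [hGdef, Sum.elim_inl, Sum.elim_inr, reduceCtorEq, if_false,
            LinearMap.neg_apply, neg_eq_zero]
          exact hWorth _ (huW j.1) _ (hPU i)
        · simp only [hGdef, Sum.elim_inr, Sum.inr.injEq, LinearMap.neg_apply]
          have expand : ∀ i j : Fin m, g (X i - ε i • h (X i)) (X j - ε j • h (X j)) =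
              g (X i) (X j) - ε j * g (X i) (h (X j)) - ε i * g (h (X i)) (X j)
                + ε i * (ε j * g (h (X i)) (h (X j))) := by
            intro i j
            simp only [map_sub, LinearMap.sub_apply, map_smul, LinearMap.map_smul₂,
              LinearMap.smul_apply, smul_eq_mul]
            ring
          rcases eq_or_ne i j with rfl | hij
          · rw [expand, hXX i, hhXhX i, hXhX i, hsym (h (X i)) (X i), hXhX i]
            rcases hε i with h' | h' <;> rw [h'] <;> norm_num
          · rw [expand, horth₁ i j hij, horth₂ i j hij, horth₃ i j hij,
              hsym (h (X i)) (X j), horth₂ j i (Ne.symm hij)]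
            simp [hij]
      have hNneg : ∀ x ∈ span ℝ (Set.range (⇑e ∘ Sum.inl)),
          (-g) x x ≤ 0 := by
        intro x hx
        obtain ⟨a, rfl⟩ := (mem_span_range_iff_exists_fun ℝ).mp hx
        simp only [LinearMap.neg_apply, neg_nonpos]
        rw [aux_gsum g _ (fun _ => (1:ℝ)) (fun k l => by
          simp only [Function.comp_apply, hsig]
          rcases eq_or_ne k l with rfl | hkl
          · simp
          · simp [hkl]) a]
        apply Finset.sum_nonneg
        intro k _
        nlinarith [sq_nonneg (a k)]
      have hNrank : finrank ℝ (span ℝ (Set.range (⇑e ∘ Sum.inl))) = n := by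
        rw [finrank_span_eq_card (e.linearIndependent.comp Sum.inl Sum.inl_injective)]
        simp
      have := aux_card (-g) G (Sum.elim (fun _ => (1:ℝ)) (fun _ => (2:ℝ)))
        (by rintro (k | k) <;> norm_num) hGram _ hNneg
      rw [hNrank, hdimV] at this
      simp only [Fintype.card_sum, Fintype.card_fin] at this
      omega
    have hcards : Fintype.card {i // Pos i} + Fintype.card {i // ¬ Pos i}
        = finrank ℝ W := by
      rw [Fintype.card_subtype_compl]
      have : Fintype.card {i // Pos i} ≤ Fintype.card (Fin (finrank ℝ W)) :=
        Fintype.card_subtype_le _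
      simp only [Fintype.card_fin] at this ⊢
      omega
    have hp' : Fintype.card {i // Pos i} = n - m := by omega
    have hq' : Fintype.card {i // ¬ Pos i} = n - m := by omega
    let epos : {i // Pos i} ≃ Fin (n - m) := Fintype.equivFinOfCardEq hp'
    let eneg : {i // ¬ Pos i} ≃ Fin (n - m) := Fintype.equivFinOfCardEq hq'
    let τ : (Fin (n - m) ⊕ Fin (n - m)) ≃ Fin (finrank ℝ W) :=
      (Equiv.sumCongr epos eneg).symm.trans (Equiv.sumCompl Pos)
    refine ⟨u.reindex τ.symm, ?_⟩
    intro i j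
    rw [Basis.reindex_apply, Basis.reindex_apply, Equiv.symm_symm]
    rcases eq_or_ne i j with rfl | hij
    · rw [if_pos rfl]
      rcases i with a | a
      · have hτ : τ (Sum.inl a) = (epos.symm a : Fin (finrank ℝ W)) := by
          simp [τ]
        rw [hτ]
        exact hspos _ (epos.symm a).2
      · have hτ : τ (Sum.inr a) = (eneg.symm a : Fin (finrank ℝ W)) := by
          simp [τ]
        rw [hτ]
        exact hsneg _ (eneg.symm a).2
    · rw [if_neg hij]
      exact huortho _ _ (fun hh => hij (τ.injective hh))
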